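/- The connection attached to the autogeodesic-path equation is stable, i.e. the right-hand side F of equation (41) satisfies the strict reducibility identities with vanishing multipliers: for all u, u̇ ∈ ℝ³ with u ≠ 0 and u̇ × u ≠ 0, (i) (∂F/∂u̇)(u, u̇)[u] = 3·u̇, and (ii) (∂F/∂u)(u, u̇)[u] + 2·(∂F/∂u̇)(u, u̇)[u̇] = 3·F(u, u̇), where (∂F/∂u) and (∂F/∂u̇) are the partial Fréchet derivatives of F in the first and second slot. -/

import Mathlib

noncomputable section
open RealInnerProductSpace

/-- Three-dimensional Euclidean space. -/
abbrev E3 := EuclideanSpace ℝ (Fin 3)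

/-- The cross product on ℝ³. -/
def cross (a b : E3) : E3 :=
  (WithLp.equiv 2 (Fin 3 → ℝ)).symm
    ![a 1 * b 2 - a 2 * b 1, a 2 * b 0 - a 0 * b 2, a 0 * b 1 - a 1 * b 0]

/-- The Euler–Poisson expression
𝓔(u, u̇, ü) = (ü × u)/‖u‖³ − 3((u̇·u)/‖u‖⁵)(u̇ × u) + (m/‖u‖³)(‖u‖² u̇ − (u̇·u) u). -/
def EP (m : ℝ) (u du ddu : E3) : E3 :=
  (‖u‖ ^ 3)⁻¹ • cross ddu u - (3 * ⟪du, u⟫ / ‖u‖ ^ 5) • cross du u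
    + (m / ‖u‖ ^ 3) • (‖u‖ ^ 2 • du - ⟪du, u⟫ • u)

/-- The right-hand side F(u, u̇) of the third-order autogeodesic-path equation
ü = F(u, u̇) of three-dimensional Euclidean space. -/
def Fauto (m A : ℝ) (u du : E3) : E3 :=
  (3 * (⟪du, u⟫ / ‖u‖ ^ 2)) • du
    - (3 * (⟪du, u⟫ ^ 2 / ‖u‖ ^ 4 - ‖du‖ ^ 2 / (2 * ‖u‖ ^ 2)
        - A * ‖cross du u‖ ^ ((4 : ℝ) / 3) / ‖u‖ ^ 2)) • u
    - m • cross u du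

lemma cross_self' (a : E3) : cross a a = 0 := by
  ext i; fin_cases i <;> simp [cross] <;> ring

lemma cross_add_left (a b c : E3) : cross (a + b) c = cross a c + cross b c := by
  ext i; fin_cases i <;> simp [cross] <;> ring

lemma cross_add_right (a b c : E3) : cross a (b + c) = cross a b + cross a c := by
  ext i; fin_cases i <;> simp [cross] <;> ring

lemma cross_smul_left (t : ℝ) (a b : E3) : cross (t • a) b = t • cross a b := by
  ext i; fin_cases i <;> simp [cross] <;> ring

lemma cross_smul_right (t : ℝ) (a b : E3) : cross a (t • b) = t • cross a b := by
  ext i; fin_cases i <;> simp [cross] <;> ring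

lemma differentiable_cross : Differentiable ℝ (fun p : E3 × E3 => cross p.1 p.2) := by
  have h : (fun p : E3 × E3 => cross p.1 p.2)
      = (PiLp.continuousLinearEquiv 2 ℝ (fun _ : Fin 3 => ℝ)).symm ∘
        (fun p : E3 × E3 => ![p.1 1 * p.2 2 - p.1 2 * p.2 1, p.1 2 * p.2 0 - p.1 0 * p.2 2,
          p.1 0 * p.2 1 - p.1 1 * p.2 0]) := by
    funext p; rfl
  rw [h]
  apply (PiLp.continuousLinearEquiv 2 ℝ (fun _ : Fin 3 => ℝ)).symm.differentiable.comp
  have hc : ∀ j : Fin 3, Differentiable ℝ (fun x : E3 => x j) := by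
    intro j
    have := (EuclideanSpace.proj j (𝕜 := ℝ)).differentiable
    exact this
  rw [differentiable_pi]
  intro i
  fin_cases i <;> simp only [Matrix.cons_val_zero, Matrix.cons_val_one, Matrix.head_cons,
    Matrix.cons_val_two, Matrix.tail_cons] <;>
    exact (((hc _).comp differentiable_fst).mul ((hc _).comp differentiable_snd)).sub
      (((hc _).comp differentiable_fst).mul ((hc _).comp differentiable_snd))

lemma path1_eq (m A : ℝ) (u du : E3) (hu : u ≠ 0) (t : ℝ) :
    Fauto m A u (du + t • u)
      = Fauto m A u du + t • ((3:ℝ) • du) + t^2 • (((3:ℝ)/2) • u) := by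
  have hn : ‖u‖ ≠ 0 := norm_ne_zero_iff.2 hu
  have hcr : cross (du + t • u) u = cross du u := by
    rw [cross_add_left, cross_smul_left, cross_self', smul_zero, add_zero]
  have hcr2 : cross u (du + t • u) = cross u du := by
    rw [cross_add_right, cross_smul_right, cross_self', smul_zero, add_zero]
  have hip : ⟪du + t • u, u⟫ = ⟪du, u⟫ + t * ‖u‖ ^ 2 := by
    rw [inner_add_left, real_inner_smul_left, real_inner_self_eq_norm_sq]
  have hnn : ‖du + t • u‖ ^ 2 = ‖du‖ ^ 2 + 2 * (t * ⟪du, u⟫) + t ^ 2 * ‖u‖ ^ 2 := by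
    rw [norm_add_sq_real, real_inner_smul_right, norm_smul]
    simp [mul_pow, Real.norm_eq_abs, sq_abs]
  simp only [Fauto, hcr, hcr2, hip, hnn]
  match_scalars <;> field_simp <;> ring

lemma Fauto_homog (m A s : ℝ) (hs : 0 < s) (u du : E3) (hu : u ≠ 0) :
    Fauto m A (s • u) ((s ^ 2) • du) = (s ^ 3) • Fauto m A u du := by
  have hn : ‖u‖ ≠ 0 := norm_ne_zero_iff.2 hu
  have hs' : s ≠ 0 := hs.ne'
  have hcr : cross ((s ^ 2) • du) (s • u) = (s ^ 2 * s) • cross du u := by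
    rw [cross_smul_left, cross_smul_right, smul_smul]
  have hcr2 : cross (s • u) ((s ^ 2) • du) = (s * s ^ 2) • cross u du := by
    rw [cross_smul_left, cross_smul_right, smul_smul]
  have hnorm : ‖s • u‖ = s * ‖u‖ := by
    rw [norm_smul, Real.norm_eq_abs, abs_of_pos hs]
  have hncr : ‖cross ((s ^ 2) • du) (s • u)‖ ^ ((4:ℝ)/3)
      = s ^ 4 * ‖cross du u‖ ^ ((4:ℝ)/3) := by
    rw [hcr, norm_smul, Real.norm_eq_abs, abs_of_pos (by positivity : (0:ℝ) < s ^ 2 * s),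
      Real.mul_rpow (by positivity) (norm_nonneg _)]
    congr 1
    rw [show s ^ 2 * s = s ^ 3 by ring, ← Real.rpow_natCast s 3, ← Real.rpow_mul hs.le,
      ← Real.rpow_natCast s 4]
    norm_num
  have hipp : ⟪(s ^ 2) • du, s • u⟫ = s ^ 2 * (s * ⟪du, u⟫) := by
    rw [real_inner_smul_left, real_inner_smul_right]
  have hnd : ‖(s ^ 2) • du‖ ^ 2 = (s ^ 2) ^ 2 * ‖du‖ ^ 2 := by
    rw [norm_smul, Real.norm_eq_abs, mul_pow, sq_abs]
  simp only [Fauto, hcr2, hipp, hnorm, hncr, hnd]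
  match_scalars <;> field_simp <;> ring

lemma diffFauto (m A : ℝ) (u du : E3) (hu : u ≠ 0) (hdu : cross du u ≠ 0) :
    DifferentiableAt ℝ (fun p : E3 × E3 => Fauto m A p.1 p.2) (u, du) := by
  have hF : (fun p : E3 × E3 => Fauto m A p.1 p.2)
      = fun p : E3 × E3 => (3 * (⟪p.2, p.1⟫ / ⟪p.1, p.1⟫)) • p.2
          - (3 * (⟪p.2, p.1⟫ ^ 2 / ⟪p.1, p.1⟫ ^ 2 - ⟪p.2, p.2⟫ / (2 * ⟪p.1, p.1⟫)
              - A * ‖cross p.2 p.1‖ ^ ((4 : ℝ) / 3) / ⟪p.1, p.1⟫)) • p.1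
          - m • cross p.1 p.2 := by
    funext p
    simp only [Fauto, real_inner_self_eq_norm_sq]
    match_scalars <;> ring
  rw [hF]
  have h11 : DifferentiableAt ℝ (fun p : E3 × E3 => ⟪p.1, p.1⟫) (u, du) :=
    differentiableAt_fst.inner ℝ differentiableAt_fst
  have h21 : DifferentiableAt ℝ (fun p : E3 × E3 => ⟪p.2, p.1⟫) (u, du) :=
    differentiableAt_snd.inner ℝ differentiableAt_fst
  have h22 : DifferentiableAt ℝ (fun p : E3 × E3 => ⟪p.2, p.2⟫) (u, du) :=
    differentiableAt_snd.inner ℝ differentiableAt_snd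
  have h11ne : ⟪(u, du).1, (u, du).1⟫ ≠ 0 := by
    simp only [real_inner_self_eq_norm_sq]
    exact pow_ne_zero 2 (norm_ne_zero_iff.2 hu)
  have hcr : DifferentiableAt ℝ (fun p : E3 × E3 => cross p.2 p.1) (u, du) :=
    (differentiable_cross (du, u)).comp (g := fun p : E3 × E3 => cross p.1 p.2)
        (f := fun p : E3 × E3 => (p.2, p.1)) (u, du)
      (differentiableAt_snd.prodMk differentiableAt_fst)
  have hrpow : DifferentiableAt ℝ
      (fun p : E3 × E3 => ‖cross p.2 p.1‖ ^ ((4 : ℝ) / 3)) (u, du) := by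
    have hne : ‖cross du u‖ ≠ 0 := norm_ne_zero_iff.2 hdu
    exact (hcr.norm ℝ hdu).rpow_const (Or.inl hne)
  simp only [div_eq_mul_inv]
  have hinv : DifferentiableAt ℝ (fun p : E3 × E3 => (⟪p.1, p.1⟫)⁻¹) (u, du) :=
    h11.inv h11ne
  have d1 : DifferentiableAt ℝ (fun p : E3 × E3 => ⟪p.2, p.1⟫ * (⟪p.1, p.1⟫)⁻¹) (u, du) :=
    h21.mul hinv
  have d2 : DifferentiableAt ℝ
      (fun p : E3 × E3 => ⟪p.2, p.1⟫ ^ 2 * ((⟪p.1, p.1⟫) ^ 2)⁻¹) (u, du) :=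
    (h21.pow 2).mul ((h11.pow 2).inv (pow_ne_zero 2 h11ne))
  have d3 : DifferentiableAt ℝ
      (fun p : E3 × E3 => ⟪p.2, p.2⟫ * (2 * ⟪p.1, p.1⟫)⁻¹) (u, du) :=
    h22.mul ((h11.const_mul 2).inv (by simpa using h11ne))
  have d4 : DifferentiableAt ℝ
      (fun p : E3 × E3 => A * ‖cross p.2 p.1‖ ^ ((4 : ℝ) / 3) * (⟪p.1, p.1⟫)⁻¹) (u, du) :=
    (hrpow.const_mul A).mul hinv
  exact (((d1.const_mul 3).smul differentiableAt_snd).sub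
      ((((d2.sub d3).sub d4).const_mul 3).smul differentiableAt_fst)).sub
    ((differentiable_cross (u, du)).const_smul m)

set_option maxHeartbeats 1000000 in
/-- the connection attached to the autogeodesic-path equation is stable:
the strict reducibility identities hold with vanishing multipliers. -/
theorem autogeodesic_connection_stable (m A : ℝ) (u du : E3)
    (hu : u ≠ 0) (hdu : cross du u ≠ 0) :
    fderiv ℝ (fun w => Fauto m A u w) du u = (3 : ℝ) • du ∧
    fderiv ℝ (fun w => Fauto m A w du) u u
        + (2 : ℝ) • fderiv ℝ (fun w => Fauto m A u w) du du
      = (3 : ℝ) • Fauto m A u du := by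
  set G : E3 × E3 → E3 := fun p => Fauto m A p.1 p.2 with hGdef
  have hG : DifferentiableAt ℝ G (u, du) := diffFauto m A u du hu hdu
  set L : E3 × E3 →L[ℝ] E3 := fderiv ℝ G (u, du) with hLdef
  have hGL : HasFDerivAt G L (u, du) := hG.hasFDerivAt
  -- fderiv in second slot
  have hpair2 : HasFDerivAt (fun w : E3 => ((u : E3), w))
      (((0 : E3 →L[ℝ] E3)).prod (ContinuousLinearMap.id ℝ E3)) du :=
    (hasFDerivAt_const u du).prodMk (hasFDerivAt_id du)
  have hf2 : HasFDerivAt (fun w : E3 => Fauto m A u w)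
      (L.comp (((0 : E3 →L[ℝ] E3)).prod (ContinuousLinearMap.id ℝ E3))) du :=
    hGL.comp du hpair2
  have hf2' : fderiv ℝ (fun w : E3 => Fauto m A u w) du = 
      L.comp (((0 : E3 →L[ℝ] E3)).prod (ContinuousLinearMap.id ℝ E3)) := hf2.fderiv
  -- fderiv in first slot
  have hpair1 : HasFDerivAt (fun w : E3 => (w, du))
      ((ContinuousLinearMap.id ℝ E3).prod (0 : E3 →L[ℝ] E3)) u :=
    (hasFDerivAt_id u).prodMk (hasFDerivAt_const du u)
  have hf10 : HasFDerivAt (G ∘ (fun w : E3 => (w, du)))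
      (L.comp ((ContinuousLinearMap.id ℝ E3).prod (0 : E3 →L[ℝ] E3))) u :=
    hGL.comp u hpair1
  have hf1 : HasFDerivAt (fun w : E3 => Fauto m A w du)
      (L.comp ((ContinuousLinearMap.id ℝ E3).prod (0 : E3 →L[ℝ] E3))) u := hf10
  have hf1' : fderiv ℝ (fun w : E3 => Fauto m A w du) u
      = L.comp ((ContinuousLinearMap.id ℝ E3).prod (0 : E3 →L[ℝ] E3)) := hf1.fderiv
  -- identity (i) via path t ↦ (u, du + t•u)
  have hcurve : HasDerivAt (fun t : ℝ => ((u : E3), du + t • u)) ((0 : E3), u) 0 := by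
    refine HasDerivAt.prodMk (hasDerivAt_const 0 u) ?_
    have := ((hasDerivAt_id (0 : ℝ)).smul_const u).const_add du
    simpa using this
  have h1 : HasDerivAt (fun t : ℝ => G (u, du + t • u)) (L ((0 : E3), u)) 0 := by
    have hGL2 : HasFDerivAt G L (u, du + (0:ℝ) • u) := by
      rw [show du + (0:ℝ) • u = du by simp]
      exact hGL
    have := hGL2.comp_hasDerivAt (x := (0 : ℝ)) hcurve
    exact this
  have h2 : HasDerivAt (fun t : ℝ => G (u, du + t • u)) ((3 : ℝ) • du) 0 := by
    have key : (fun t : ℝ => G (u, du + t • u))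
        = fun t : ℝ => Fauto m A u du + t • ((3:ℝ) • du) + t^2 • (((3:ℝ)/2) • u) := by
      funext t; exact path1_eq m A u du hu t
    rw [key]
    have ha : HasDerivAt (fun t : ℝ => t • ((3:ℝ) • du)) ((3:ℝ) • du) 0 := by
      simpa using (hasDerivAt_id (0:ℝ)).smul_const ((3:ℝ) • du)
    have hb : HasDerivAt (fun t : ℝ => t ^ 2 • (((3:ℝ)/2) • u)) (0 : E3) 0 := by
      have := (hasDerivAt_pow 2 (0:ℝ)).smul_const (((3:ℝ)/2) • u)
      simpa using this
    have := (ha.const_add (Fauto m A u du)).add hb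
    simp only [add_zero] at this
    exact this
  have hL0u : L ((0 : E3), u) = (3 : ℝ) • du := h1.unique h2
  have part1 : fderiv ℝ (fun w => Fauto m A u w) du u = (3 : ℝ) • du := by
    rw [hf2']
    simpa using hL0u
  refine ⟨part1, ?_⟩
  -- identity (ii) via path t ↦ ((1+t)•u, (1+t)^2•du)
  have hγ : HasDerivAt (fun t : ℝ => (((1+t) • u : E3), ((1+t)^2) • du)) (u, (2:ℝ) • du) 0 := by
    refine HasDerivAt.prodMk ?_ ?_
    · have := (((hasDerivAt_id (0:ℝ)).const_add 1)).smul_const u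
      simpa using this
    · have := (((hasDerivAt_id (0:ℝ)).const_add 1).pow 2).smul_const du
      norm_num at this
      simpa using this
  have h3 : HasDerivAt (fun t : ℝ => G ((1+t) • u, ((1+t)^2) • du)) (L (u, (2:ℝ) • du)) 0 := by
    have hGL' : HasFDerivAt G L ((1+(0:ℝ)) • u, ((1+(0:ℝ))^2) • du) := by
      norm_num [hGL]
    have := hGL'.comp_hasDerivAt (x := (0 : ℝ)) hγ
    exact this
  have h4 : HasDerivAt (fun t : ℝ => G ((1+t) • u, ((1+t)^2) • du))
      ((3 : ℝ) • Fauto m A u du) 0 := by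
    have heq : (fun t : ℝ => G ((1+t) • u, ((1+t)^2) • du))
        =ᶠ[nhds 0] fun t : ℝ => ((1+t)^3) • Fauto m A u du := by
      filter_upwards [eventually_gt_nhds (show (-1:ℝ) < 0 by norm_num)] with t ht
      have hs : (0:ℝ) < 1 + t := by linarith
      exact Fauto_homog m A (1+t) hs u du hu
    have hbase : HasDerivAt (fun t : ℝ => ((1+t)^3) • Fauto m A u du)
        ((3 : ℝ) • Fauto m A u du) 0 := by
      have := (((hasDerivAt_id (0:ℝ)).const_add 1).pow 3).smul_const (Fauto m A u du)
      norm_num at this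
      simpa using this
    exact hbase.congr_of_eventuallyEq heq
  have hL2 : L (u, (2:ℝ) • du) = (3 : ℝ) • Fauto m A u du := h3.unique h4
  have hsplit : L (u, (2:ℝ) • du) = L ((u : E3), (0 : E3)) + (2:ℝ) • L ((0 : E3), du) := by
    have : ((u : E3), (2:ℝ) • du) = ((u : E3), (0 : E3)) + (2:ℝ) • ((0 : E3), du) := by
      simp [Prod.ext_iff]
    rw [this, map_add, map_smul]
  rw [hf1', hf2']
  have e1 : (L.comp ((ContinuousLinearMap.id ℝ E3).prod (0 : E3 →L[ℝ] E3))) u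
      = L ((u : E3), (0 : E3)) := by simp
  have e2 : (L.comp (((0 : E3 →L[ℝ] E3)).prod (ContinuousLinearMap.id ℝ E3))) du
      = L ((0 : E3), du) := by simp
  rw [e1, e2, ← hL2, hsplit]
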